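/- Let G be an abelian p-group with an unbounded basic subgroup, and let x ∈ G generate a cyclic subgroup ⟨x⟩ such that every monomorphism ⟨x⟩ → G extends to an endomorphism of G. Then ⟨x⟩ ∩ G¹ = 0, where G¹ = ⋂_{n>0} pⁿG is the first Ulm subgroup. -/

import Mathlib

open AddSubgroup

/-- The `p`-height of an element, as an extended natural number. -/
noncomputable def pHeight (p : ℕ) {G : Type*} [AddCommGroup G] (x : G) : ℕ∞ :=
  sSup {n : ℕ∞ | ∃ m : ℕ, n = (m : ℕ∞) ∧ ∃ y : G, p ^ m • y = x}

/-- `G` is an abelian `p`-group. -/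
def IsPGrp (p : ℕ) (G : Type*) [AddCommGroup G] : Prop :=
  ∀ x : G, ∃ n : ℕ, p ^ n • x = 0

/-- `H ∈ Q(G)`: every homomorphism `H → G` extends to an endomorphism of `G`. -/
def InQ {G : Type*} [AddCommGroup G] (H : AddSubgroup G) : Prop :=
  ∀ f : H →+ G, ∃ g : G →+ G, ∀ x : H, g x = f x

/-- `H ∈ P(G)`: every monomorphism `H → G` extends to an endomorphism of `G`. -/
def InP {G : Type*} [AddCommGroup G] (H : AddSubgroup G) : Prop :=
  ∀ f : H →+ G, Function.Injective f → ∃ g : G →+ G, ∀ x : H, g x = f x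

/-- `H ∈ W(G)`: every endomorphism of `H` extends to an endomorphism of `G`. -/
def InW {G : Type*} [AddCommGroup G] (H : AddSubgroup G) : Prop :=
  ∀ f : H →+ H, ∃ g : G →+ G, ∀ x : H, g x = (f x : G)

/-- `K` is an internal direct sum of cyclic subgroups. -/
def IsDirectSumOfCyclics {G : Type*} [AddCommGroup G] (K : AddSubgroup G) : Prop :=
  ∃ (ι : Type) (a : ι → G), (∀ i, a i ∈ K) ∧ (⨆ i, zmultiples (a i)) = K ∧
    iSupIndep (fun i => zmultiples (a i))

/-- `K` is a `p`-pure subgroup: `pⁿG ∩ K = pⁿK`. -/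
def IsPure (p : ℕ) {G : Type*} [AddCommGroup G] (K : AddSubgroup G) : Prop :=
  ∀ n : ℕ, ∀ x ∈ K, (∃ y : G, p ^ n • y = x) → ∃ z ∈ K, p ^ n • z = x

/-- The quotient `G/K` is divisible (equivalently `G = K + pG`). -/
def QuotDivisible (p : ℕ) {G : Type*} [AddCommGroup G] (K : AddSubgroup G) : Prop :=
  ∀ x : G, ∃ y : G, x - p • y ∈ K

/-- The Ulm sequence of `x` has a gap before index `k` (with `h₋₁ = -1`). -/
def HasGapBefore (p : ℕ) {G : Type*} [AddCommGroup G] (x : G) (k : ℕ) : Prop :=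
  if k = 0 then 0 < pHeight p x
  else pHeight p (p ^ (k - 1) • x) + 1 < pHeight p (p ^ k • x)

section Aux

variable {G : Type*} [AddCommGroup G]

lemma nat_int_smul (m : ℕ) (g : G) : (m : ℤ) • g = m • g := natCast_zsmul g m

/-- Choose a coefficient for an element of a cyclic subgroup. -/
noncomputable def coeffOf (x : G) (y : AddSubgroup.zmultiples x) : ℤ :=
  (AddSubgroup.mem_zmultiples_iff.mp y.2).choose

lemma coeffOf_spec (x : G) (y : AddSubgroup.zmultiples x) : coeffOf x y • x = (y : G) :=
  (AddSubgroup.mem_zmultiples_iff.mp y.2).choose_spec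

lemma exists_hom_of_zmultiples (x t : G)
    (h : ∀ c : ℤ, c • x = 0 → c • t = 0) :
    ∃ F : AddSubgroup.zmultiples x →+ G,
      ∀ (c : ℤ) (y : AddSubgroup.zmultiples x), c • x = (y : G) → F y = c • t := by
  have key : ∀ (c : ℤ) (y : AddSubgroup.zmultiples x), c • x = (y : G) →
      coeffOf x y • t = c • t := by
    intro c y hc
    have h0 : (coeffOf x y - c) • x = 0 := by
      rw [sub_smul, coeffOf_spec, hc, sub_self]
    have h1 := h _ h0
    rwa [sub_smul, sub_eq_zero] at h1
  refine ⟨{ toFun := fun y => coeffOf x y • t, map_zero' := ?_, map_add' := ?_ }, ?_⟩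
  · simpa using key 0 0 (by simp)
  · intro y z
    have hsum : (coeffOf x y + coeffOf x z) • x = ((y + z : AddSubgroup.zmultiples x) : G) := by
      rw [add_smul, coeffOf_spec, coeffOf_spec]; rfl
    simpa [add_smul] using key _ (y + z) hsum
  · intro c y hc
    exact key c y hc

end Aux

theorem stmt1 {G : Type*} [AddCommGroup G] (p : ℕ) (hp : p.Prime) (hG : IsPGrp p G)
    (B : AddSubgroup G) (hpure : IsPure p B) (hcyc : IsDirectSumOfCyclics B)
    (hdiv : QuotDivisible p B) (hunb : ∀ n : ℕ, ∃ b ∈ B, p ^ n • b ≠ 0)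
    (x : G) (hx : InP (zmultiples x)) :
    ∀ z ∈ zmultiples x, (∀ n : ℕ, ∃ y : G, p ^ n • y = z) → z = 0 := by
  classical
  intro z hz hdivz
  by_contra hz0
  have hpInt : Prime (p : ℤ) := Nat.prime_iff_prime_int.mp hp
  have hcomm : ∀ (m : ℕ) (c : ℤ) (g : G), m • (c • g) = c • (m • g) := by
    intro m c g
    rw [← nat_int_smul m (c • g), ← nat_int_smul m g, ← mul_smul, ← mul_smul, mul_comm]
  -- order of x
  obtain ⟨nx, hnx⟩ := hG x
  obtain ⟨r, hrn, hr⟩ := (Nat.dvd_prime_pow hp).mp (addOrderOf_dvd_of_nsmul_eq_zero hnx)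
  have hxne : x ≠ 0 := by
    rintro rfl
    obtain ⟨c, hc⟩ := AddSubgroup.mem_zmultiples_iff.mp hz
    exact hz0 (by simpa using hc.symm)
  have hr1 : 1 ≤ r := by
    rcases Nat.eq_zero_or_pos r with h0 | h
    · rw [h0, pow_zero] at hr; exact absurd (AddMonoid.addOrderOf_eq_one_iff.mp hr) hxne
    · exact h
  have hxord : ∀ c : ℤ, c • x = 0 ↔ ((p : ℤ) ^ r ∣ c) := by
    intro c
    rw [← addOrderOf_dvd_iff_zsmul_eq_zero, hr]
    push_cast
    rfl
  -- the socle element w of ⟨z⟩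
  have hkex : ∃ n, p ^ n • z = 0 := hG z
  set k := Nat.find hkex with hkdef
  have hkz : p ^ k • z = 0 := Nat.find_spec hkex
  have hk1 : 1 ≤ k := by
    rcases Nat.eq_zero_or_pos k with h0 | h
    · rw [h0, pow_zero, one_smul] at hkz; exact absurd hkz hz0
    · exact h
  set w := p ^ (k - 1) • z with hwdef
  have hwne : w ≠ 0 := Nat.find_min hkex (by omega)
  have hpw : p • w = 0 := by
    rw [hwdef, smul_smul]
    have h2 : p * p ^ (k - 1) = p ^ k := by
      rw [← pow_succ']; congr 1; omega
    rw [h2]; exact hkz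
  have hwmem : w ∈ zmultiples x := AddSubgroup.nsmul_mem _ hz _
  have hwdiv : ∀ n : ℕ, ∃ y : G, p ^ n • y = w := by
    intro n
    obtain ⟨y, hy⟩ := hdivz n
    refine ⟨p ^ (k - 1) • y, ?_⟩
    rw [smul_smul, mul_comm, ← smul_smul, hy]
  -- p^(r-1) • x has infinite height
  obtain ⟨t, ht⟩ := AddSubgroup.mem_zmultiples_iff.mp hwmem
  have hptx : ((p : ℤ) * t) • x = 0 := by
    rw [mul_smul, ht]
    simpa using hpw
  have hprr : (p : ℤ) ^ r = (p : ℤ) ^ (r - 1) * p := by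
    rw [← pow_succ]; congr 1; omega
  have hdt : (p : ℤ) ^ (r - 1) ∣ t := by
    have h1 : (p : ℤ) ^ r ∣ (p : ℤ) * t := (hxord _).mp hptx
    have h2 : (p : ℤ) ^ r = (p : ℤ) * (p : ℤ) ^ (r - 1) := by rw [hprr]; ring
    rw [h2] at h1
    exact (mul_dvd_mul_iff_left (by exact_mod_cast hp.ne_zero : (p : ℤ) ≠ 0)).mp h1
  obtain ⟨t', ht'⟩ := hdt
  have hpt' : ¬ (p : ℤ) ∣ t' := by
    rintro ⟨e, he⟩
    apply hwne
    rw [← ht, ht', he]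
    have h3 : (p : ℤ) ^ (r - 1) * ((p : ℤ) * e) = e * (p : ℤ) ^ r := by rw [hprr]; ring
    rw [h3, mul_smul, (hxord _).mpr dvd_rfl, smul_zero]
  have hbw : ∃ β : ℤ, β • w = p ^ (r - 1) • x := by
    obtain ⟨α, β, hab⟩ := hpInt.coprime_iff_not_dvd.mpr hpt'
    refine ⟨β, ?_⟩
    have h0 : ((p : ℤ) ^ (r - 1) - β * t) • x = 0 := by
      apply (hxord _).mpr
      refine ⟨α, ?_⟩
      rw [ht', hprr]
      linear_combination (-((p : ℤ) ^ (r - 1))) * hab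
    rw [sub_smul, sub_eq_zero] at h0
    rw [← ht, ← mul_smul, ← h0]
    rw [← nat_int_smul (p ^ (r - 1)) x]
    push_cast
    rfl
  have hx1 : ∀ n : ℕ, ∃ y : G, p ^ n • y = p ^ (r - 1) • x := by
    intro n
    obtain ⟨β, hβ⟩ := hbw
    obtain ⟨y, hy⟩ := hwdiv n
    exact ⟨β • y, by rw [hcomm, hy, hβ]⟩
  -- find a generator of large order
  obtain ⟨ι, af, haB, hsup, hindep⟩ := hcyc
  obtain ⟨b, hbB, hbne⟩ := hunb r
  have hexi : ∃ i, p ^ r • af i ≠ 0 := by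
    by_contra hall
    push_neg at hall
    let S : AddSubgroup G :=
      { carrier := {g | p ^ r • g = 0}
        zero_mem' := by simp
        add_mem' := by
          intro u v hu hv
          simp only [Set.mem_setOf_eq, smul_add] at *
          rw [hu, hv, add_zero]
        neg_mem' := by
          intro u hu
          simp only [Set.mem_setOf_eq, smul_neg] at *
          rw [hu, neg_zero] }
    have hBS : B ≤ S := by
      rw [← hsup]
      refine iSup_le fun i => ?_
      rw [AddSubgroup.zmultiples_le]
      exact hall i
    exact hbne (hBS hbB)
  obtain ⟨i, hi⟩ := hexi
  set a := af i with hadef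
  obtain ⟨na, hna⟩ := hG a
  obtain ⟨s, hsn, hs⟩ := (Nat.dvd_prime_pow hp).mp (addOrderOf_dvd_of_nsmul_eq_zero hna)
  have hrs : r < s := by
    by_contra hcon
    push_neg at hcon
    exact hi (addOrderOf_dvd_iff_nsmul_eq_zero.mp (hs ▸ pow_dvd_pow p hcon))
  have haord : ∀ c : ℤ, c • a = 0 ↔ ((p : ℤ) ^ s ∣ c) := by
    intro c
    rw [← addOrderOf_dvd_iff_zsmul_eq_zero, hs]
    push_cast
    rfl
  -- key lemma: elements p^j·d·a (p ∤ d, j < s) are not divisible by p^(j+1)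
  have L : ∀ (j : ℕ) (d : ℤ), ¬ ((p : ℤ) ∣ d) → j < s →
      ∀ g : G, p ^ (j + 1) • g ≠ ((p : ℤ) ^ j * d) • a := by
    intro j d hd hjs g hg
    have hvB : ((p : ℤ) ^ j * d) • a ∈ B := AddSubgroup.zsmul_mem B (haB i) _
    obtain ⟨z', hz'B, hz'⟩ := hpure (j + 1) _ hvB ⟨g, hg⟩
    have hsplit : z' ∈ zmultiples a ⊔ (⨆ (l) (_ : l ≠ i), zmultiples (af l)) := by
      have hle : B ≤ zmultiples a ⊔ (⨆ (l) (_ : l ≠ i), zmultiples (af l)) := by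
        rw [← hsup]
        refine iSup_le fun l => ?_
        by_cases hl : l = i
        · subst hl; exact le_sup_left
        · exact le_trans (le_iSup₂ (f := fun l (_ : l ≠ i) => zmultiples (af l)) l hl)
            le_sup_right
      exact hle hz'B
    obtain ⟨u, hu, v, hv, huv⟩ := AddSubgroup.mem_sup.mp hsplit
    obtain ⟨c, hc⟩ := AddSubgroup.mem_zmultiples_iff.mp hu
    have h1 : ((p : ℤ) ^ (j + 1)) • z' = ((p : ℤ) ^ j * d) • a := by
      have hcast : ((p : ℤ) ^ (j + 1)) = ((p ^ (j + 1) : ℕ) : ℤ) := by push_cast; ring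
      rw [hcast, nat_int_smul, hz']
    have hkey : ((p : ℤ) ^ j * d - (p : ℤ) ^ (j + 1) * c) • a = ((p : ℤ) ^ (j + 1)) • v := by
      calc ((p : ℤ) ^ j * d - (p : ℤ) ^ (j + 1) * c) • a
          = ((p : ℤ) ^ j * d) • a - ((p : ℤ) ^ (j + 1) * c) • a := sub_smul _ _ _
        _ = ((p : ℤ) ^ (j + 1)) • z' - ((p : ℤ) ^ (j + 1)) • (c • a) := by
            rw [← h1, mul_smul ((p : ℤ) ^ (j + 1)) c a]
        _ = ((p : ℤ) ^ (j + 1)) • (u + v) - ((p : ℤ) ^ (j + 1)) • u := by rw [huv, hc]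
        _ = ((p : ℤ) ^ (j + 1)) • v := by rw [smul_add]; abel
    have hmem1 : ((p : ℤ) ^ j * d - (p : ℤ) ^ (j + 1) * c) • a ∈ zmultiples a :=
      AddSubgroup.zsmul_mem _ (AddSubgroup.mem_zmultiples a) _
    have hmem2 : ((p : ℤ) ^ j * d - (p : ℤ) ^ (j + 1) * c) • a ∈
        (⨆ (l) (_ : l ≠ i), zmultiples (af l)) := by
      rw [hkey]
      exact AddSubgroup.zsmul_mem _ hv _
    have h0 : ((p : ℤ) ^ j * d - (p : ℤ) ^ (j + 1) * c) • a = 0 := by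
      have hdisj := hindep i
      rw [disjoint_iff] at hdisj
      have hmem : ((p : ℤ) ^ j * d - (p : ℤ) ^ (j + 1) * c) • a ∈
          ((fun l => zmultiples (af l)) i ⊓ ⨆ (l) (_ : l ≠ i), zmultiples (af l)) :=
        ⟨hmem1, hmem2⟩
      rw [hdisj] at hmem
      exact hmem
    have hdvd : ((p : ℤ) ^ s) ∣ ((p : ℤ) ^ j * (d - p * c)) := by
      have h2 := (haord _).mp h0
      have h3 : (p : ℤ) ^ j * d - (p : ℤ) ^ (j + 1) * c = (p : ℤ) ^ j * (d - p * c) := by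
        rw [pow_succ]; ring
      rwa [h3] at h2
    have hnd : ¬ (p : ℤ) ∣ (d - p * c) := by
      intro hdd
      exact hd (by have h4 := dvd_add hdd (Dvd.intro c rfl); simpa using h4)
    have hfin : (p : ℤ) ^ s ∣ (p : ℤ) ^ j :=
      ((hpInt.coprime_iff_not_dvd.mpr hnd).pow_left).dvd_of_dvd_mul_right hdvd
    have hfin2 : p ^ s ∣ p ^ j := by exact_mod_cast hfin
    have := (Nat.pow_dvd_pow_iff_le_right hp.one_lt).mp hfin2
    omega
  -- the injection x ↦ x + p^(s-r)·a
  set t₀ := x + p ^ (s - r) • a with ht₀def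
  have hsr : r + (s - r) = s := by omega
  have hra : ((p : ℤ) ^ r) • (p ^ (s - r) • a) = 0 := by
    rw [← nat_int_smul (p ^ (s - r)) a, ← mul_smul]
    apply (haord _).mpr
    push_cast
    exact ⟨1, by rw [mul_one, ← pow_add, hsr]⟩
  have hpr0 : ((p : ℤ) ^ r) • t₀ = 0 := by
    rw [ht₀def, smul_add, (hxord _).mpr dvd_rfl, hra, add_zero]
  have hwd : ∀ c : ℤ, c • x = 0 → c • t₀ = 0 := by
    intro c hc
    obtain ⟨e, he⟩ := (hxord c).mp hc
    rw [he, mul_comm, mul_smul, hpr0, smul_zero]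
  obtain ⟨F, hF⟩ := exists_hom_of_zmultiples x t₀ hwd
  have hFinj : Function.Injective F := by
    rw [injective_iff_map_eq_zero]
    intro y hy
    by_contra hyne
    obtain ⟨c, hc⟩ := AddSubgroup.mem_zmultiples_iff.mp y.2
    have hct : c • t₀ = 0 := by rw [← hF c y hc]; exact hy
    have hcx : ¬ ((p : ℤ) ^ r ∣ c) := by
      intro hcd
      have hy0 : (y : G) = 0 := by rw [← hc]; exact (hxord c).mpr hcd
      exact hyne (Subtype.ext (by simpa using hy0))
    -- gcd of c and p^r
    set m := Int.gcd c ((p : ℤ) ^ r) with hmdef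
    have hmdvd : m ∣ p ^ r := by
      have h1 : (m : ℤ) ∣ (p : ℤ) ^ r := Int.gcd_dvd_right _ _
      exact_mod_cast h1
    obtain ⟨j, hjr, hj⟩ := (Nat.dvd_prime_pow hp).mp hmdvd
    have hjlt : j < r := by
      rcases Nat.lt_or_ge j r with h | h
      · exact h
      · exfalso
        apply hcx
        have h1 : (m : ℤ) ∣ c := Int.gcd_dvd_left _ _
        have hjr' : j = r := le_antisymm hjr h
        rw [hj, hjr'] at h1
        exact_mod_cast h1
    set α := Int.gcdA c ((p : ℤ) ^ r) with hαdef
    set β := Int.gcdB c ((p : ℤ) ^ r) with hβdef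
    have hbez : ((p : ℤ) ^ j) = c * α + (p : ℤ) ^ r * β := by
      have h4 := Int.gcd_eq_gcd_ab c ((p : ℤ) ^ r)
      rw [← hmdef, hj] at h4
      push_cast at h4
      exact h4
    set e := (p : ℤ) ^ (r - 1 - j) * (c * α) with hedef
    have hexx : e • x = ((p : ℤ) ^ (r - 1)) • x := by
      have h1 : (e - (p : ℤ) ^ (r - 1)) • x = 0 := by
        apply (hxord _).mpr
        refine ⟨-((p : ℤ) ^ (r - 1 - j) * β), ?_⟩
        rw [hedef]
        have hsplit : (p : ℤ) ^ (r - 1) = (p : ℤ) ^ (r - 1 - j) * (p : ℤ) ^ j := by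
          rw [← pow_add]; congr 1; omega
        rw [hsplit, hbez]
        ring
      rw [sub_smul, sub_eq_zero] at h1
      exact h1
    have het : e • t₀ = 0 := by
      rw [hedef, mul_comm c α, mul_smul, mul_smul, hct, smul_zero, smul_zero]
    obtain ⟨q, hq⟩ : ((p : ℤ) ^ r) ∣ (e - (p : ℤ) ^ (r - 1)) := by
      apply (hxord _).mp
      rw [sub_smul, hexx, sub_self]
    have hea : e • (p ^ (s - r) • a) = p ^ (s - 1) • a := by
      have he2 : e = (p : ℤ) ^ (r - 1) + (p : ℤ) ^ r * q := by linear_combination hq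
      rw [he2, add_smul, mul_comm ((p : ℤ) ^ r) q, mul_smul, hra, smul_zero, add_zero]
      rw [← nat_int_smul (p ^ (s - r)) a, ← mul_smul]
      have hcast : (p : ℤ) ^ (r - 1) * ((p ^ (s - r) : ℕ) : ℤ) = ((p ^ (s - 1) : ℕ) : ℤ) := by
        push_cast
        rw [← pow_add]
        congr 1
        omega
      rw [hcast, nat_int_smul]
    have hzero : ((p : ℤ) ^ (r - 1)) • x + p ^ (s - 1) • a = 0 := by
      have h3 : e • t₀ = ((p : ℤ) ^ (r - 1)) • x + p ^ (s - 1) • a := by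
        rw [ht₀def, smul_add, hexx, hea]
      rw [← h3]; exact het
    -- contradiction via L
    obtain ⟨y1, hy1⟩ := hx1 s
    apply L (s - 1) 1 (by simpa using hpInt.not_dvd_one) (by omega) (-y1)
    have hps : p ^ (s - 1 + 1) = p ^ s := by congr 1; omega
    rw [hps, smul_neg, hy1, mul_one]
    have hxr : p ^ (r - 1) • x = ((p : ℤ) ^ (r - 1)) • x := by
      rw [← nat_int_smul (p ^ (r - 1)) x]; push_cast; rfl
    have har : ((p : ℤ) ^ (s - 1)) • a = p ^ (s - 1) • a := by
      rw [← nat_int_smul (p ^ (s - 1)) a]; push_cast; rfl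
    rw [hxr, har]
    exact neg_eq_of_add_eq_zero_right hzero
  -- extend and derive the final contradiction
  obtain ⟨g, hg⟩ := hx F hFinj
  have hgx : g x = t₀ := by
    have h1 := hg ⟨x, AddSubgroup.mem_zmultiples x⟩
    rw [hF 1 ⟨x, AddSubgroup.mem_zmultiples x⟩ (by simp)] at h1
    simpa using h1
  obtain ⟨y1, hy1⟩ := hx1 s
  have hgval : g (p ^ (r - 1) • x) = p ^ (r - 1) • x + p ^ (s - 1) • a := by
    rw [map_nsmul, hgx, ht₀def, smul_add, smul_smul, ← pow_add]
    have hnum : r - 1 + (s - r) = s - 1 := by omega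
    rw [hnum]
  have hfinal : p ^ s • (g y1 - y1) = p ^ (s - 1) • a := by
    rw [smul_sub, ← map_nsmul, hy1, hgval]
    abel
  apply L (s - 1) 1 (by simpa using hpInt.not_dvd_one) (by omega) (g y1 - y1)
  have hps : p ^ (s - 1 + 1) = p ^ s := by congr 1; omega
  rw [hps, hfinal, mul_one]
  rw [← nat_int_smul (p ^ (s - 1)) a]
  push_cast
  rfl
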